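/- arXiv:1812.10554 — 9 statements merged into one kernel-verified Lean document; each statement's English description precedes it below -/
import Mathlib

section
/- In a finite p-group that is not cyclic, the subgroup generated by any conjugacy class is a proper subgroup. -/
open scoped Pointwise

/-- In a finite p-group that is not cyclic, the subgroup generated by any
conjugacy class is a proper subgroup. -/
theorem pGroup_closure_conjClass_ne_top {p : ℕ} [Fact p.Prime]
    {G : Type*} [Group G] [Finite G] (hp : IsPGroup p G) (hnc : ¬ IsCyclic G)
    (g : G) : Subgroup.closure {x : G | IsConj g x} ≠ ⊤ := by
  have hzp : Subgroup.zpowers g ≠ ⊤ := by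
    intro h
    exact hnc ⟨⟨g, fun x => by
      have hx : x ∈ Subgroup.zpowers g := h ▸ Subgroup.mem_top x
      exact hx⟩⟩
  haveI : IsCoatomic (Subgroup G) :=
    isCoatomic_of_orderTop_gt_wellFounded (Finite.to_wellFoundedGT).wf
  -- maximal subgroup M containing zpowers g
  obtain ⟨M, hM, hle⟩ :=
    ((eq_top_or_exists_le_coatom (Subgroup.zpowers g)).resolve_left hzp)
  -- M is normal since finite p-groups are nilpotent
  haveI : Group.IsNilpotent G := hp.isNilpotent
  haveI hMnormal : M.Normal :=
    Subgroup.NormalizerCondition.normal_of_coatom M normalizerCondition_of_isNilpotent hM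
  -- the quotient G/M is cyclic (any nontrivial element generates)
  have hcyc : IsCyclic (G ⧸ M) := by
    obtain ⟨y, hy⟩ : ∃ y : G, y ∉ M := by
      by_contra h
      push_neg at h
      exact hM.1 ((Subgroup.eq_top_iff' M).mpr h)
    refine ⟨⟨(y : G ⧸ M), fun z => ?_⟩⟩
    have hlt : M < M ⊔ Subgroup.zpowers y :=
      lt_of_le_of_ne le_sup_left fun h => hy
        (h ▸ Subgroup.mem_sup_right (Subgroup.mem_zpowers y))
    have htop : M ⊔ Subgroup.zpowers y = ⊤ := hM.2 _ hlt
    have hmap : Subgroup.map (QuotientGroup.mk' M) (M ⊔ Subgroup.zpowers y) = ⊤ := by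
      rw [htop, Subgroup.map_top_of_surjective _ (QuotientGroup.mk'_surjective M)]
    obtain ⟨w, hw, hwz⟩ : z ∈ Subgroup.map (QuotientGroup.mk' M) (M ⊔ Subgroup.zpowers y) :=
      hmap ▸ Subgroup.mem_top z
    have hset : (↑(M ⊔ Subgroup.zpowers y) : Set G) = ↑M * ↑(Subgroup.zpowers y) :=
      Subgroup.normal_mul M (Subgroup.zpowers y)
    have hw2 : w ∈ (↑M * ↑(Subgroup.zpowers y) : Set G) := hset ▸ hw
    obtain ⟨m, hm, k, hk, rfl⟩ := Set.mem_mul.mp hw2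
    obtain ⟨n, rfl⟩ := hk
    refine ⟨n, ?_⟩
    rw [← hwz]
    simp only [QuotientGroup.mk'_apply, QuotientGroup.mk_mul]
    rw [(QuotientGroup.eq_one_iff m).mpr hm, one_mul]
    simp [QuotientGroup.mk_zpow]
  -- cyclic quotient is commutative
  have hcomm : ∀ a b : G ⧸ M, a * b = b * a := by
    letI := hcyc.commGroup
    exact fun a b => mul_comm a b
  intro htop
  apply hM.1
  rw [eq_top_iff, ← htop, Subgroup.closure_le]
  rintro x ⟨c, hc⟩
  have hgM : ((g : G ⧸ M)) = 1 :=
    (QuotientGroup.eq_one_iff g).mpr (hle (Subgroup.mem_zpowers g))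
  have hx1 : ((x : G ⧸ M)) = 1 := by
    have h1 : ((c : G) : G ⧸ M) * (g : G ⧸ M) = (x : G ⧸ M) * ((c : G) : G ⧸ M) := by
      have := congrArg (fun t : G => (t : G ⧸ M)) hc
      simpa [QuotientGroup.mk_mul] using this
    rw [hgM, mul_one, hcomm] at h1
    exact mul_left_cancel (h1.symm.trans (mul_one _).symm)
  exact (QuotientGroup.eq_one_iff x).mp hx1
end

section
/- In a finite p-group, the conjugacy class of a non-central element is not connected: the subgroup generated by the class does not act transitively by conjugation on the class. -/
/-- In a finite p-group, the conjugacy class of a non-central element is not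
connected: the subgroup H = ⟨C⟩ generated by the class C does not act
transitively by conjugation on C. -/
theorem pGroup_conjClass_not_connected {p : ℕ} [Fact p.Prime]
    {G : Type*} [Group G] [Finite G] (hp : IsPGroup p G)
    (g : G) (hg : g ∉ Subgroup.center G) :
    ∃ a ∈ {x : G | IsConj g x}, ∃ b ∈ {x : G | IsConj g x},
      ∀ h ∈ Subgroup.closure {x : G | IsConj g x}, h * a * h⁻¹ ≠ b := by
  by_contra hcon
  push_neg at hcon
  set C : Set G := {x : G | IsConj g x} with hC
  set H : Subgroup G := Subgroup.closure C with hH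
  have hgC : g ∈ C := IsConj.refl g
  have hgH : g ∈ H := Subgroup.subset_closure hgC
  have htrans : ∀ b ∈ C, ∃ h ∈ H, h * g * h⁻¹ = b := fun b hb => hcon g hgC b hb
  have hpH : IsPGroup p H := hp.to_subgroup H
  have hnil : Group.IsNilpotent H := hpH.isNilpotent
  set gH : H := ⟨g, hgH⟩ with hgHdef
  -- H is generated by g
  have hzp : Subgroup.zpowers gH = ⊤ := by
    rcases eq_top_or_exists_le_coatom (Subgroup.zpowers gH) with h | ⟨M, hM, hle⟩
    · exact h
    · exfalso
      have key : ∀ K : Subgroup H, IsCoatom K → K.Normal :=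
        ((isNilpotent_of_finite_tfae (G := H)).out 0 2).mp hnil
      have hMnormal : M.Normal := key M hM
      have hCM : C ⊆ (M.map H.subtype : Set G) := by
        intro b hb
        obtain ⟨h, hh, rfl⟩ := htrans b hb
        exact ⟨(⟨h, hh⟩ : H) * gH * (⟨h, hh⟩ : H)⁻¹,
          hMnormal.conj_mem gH (hle (Subgroup.mem_zpowers gH)) ⟨h, hh⟩, rfl⟩
      have hle2 : H ≤ M.map H.subtype := (Subgroup.closure_le _).mpr hCM
      have hMtop : M = ⊤ := by
        rw [eq_top_iff]
        intro x _
        obtain ⟨y, hy, hxy⟩ := hle2 x.2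
        rwa [show y = x from Subtype.ext hxy] at hy
      exact hM.1 hMtop
  -- pick a conjugate of g distinct from g
  have hy : ∃ y : G, y * g * y⁻¹ ≠ g := by
    by_contra hy
    push_neg at hy
    exact hg (Subgroup.mem_center_iff.mpr fun z => by
      have := mul_inv_eq_iff_eq_mul.mp (hy z)
      rw [← this])
  obtain ⟨y, hyne⟩ := hy
  have hbC : y * g * y⁻¹ ∈ C := isConj_iff.mpr ⟨y, rfl⟩
  obtain ⟨h, hh, heq⟩ := htrans _ hbC
  -- h is a power of g, hence commutes with g
  obtain ⟨k, hk⟩ := Subgroup.mem_zpowers_iff.mp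
    (hzp ▸ Subgroup.mem_top (⟨h, hh⟩ : H))
  have hhg : h = g ^ k := by
    have := congrArg (Subtype.val) hk
    simpa using this.symm
  have hcomm : h * g = g * h := by
    rw [hhg]; exact (((Commute.refl g).zpow_left k).eq)
  rw [hcomm, mul_inv_cancel_right] at heq
  exact hyne heq.symm
end

section
/- In a finite p-group, a conjugacy class C decomposes into at least two orbits under conjugation by the subgroup H = ⟨C⟩, provided |C| > 1. -/
open Subgroup
open scoped commutatorElement

/-- In a finite nilpotent group, a subgroup generating the group together with the
commutator subgroup is the whole group. -/
lemma aux_nongenerating {H : Type*} [Group H] [Finite H] [Group.IsNilpotent H]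
    {K : Subgroup H} (h : K ⊔ commutator H = ⊤) : K = ⊤ := by
  by_contra hK
  obtain ⟨M, hM, hKM⟩ := (IsCoatomic.eq_top_or_exists_le_coatom K).resolve_left hK
  have hnc : NormalizerCondition H := normalizerCondition_of_isNilpotent
  have hMn : M.Normal := Subgroup.NormalizerCondition.normal_of_coatom M hnc hM
  -- The quotient H ⧸ M is cyclic (hence abelian), so commutator H ≤ M.
  have hcomm : commutator H ≤ M := by
    have hQcomm : ∀ x y : H ⧸ M, x * y = y * x := by
      rcases subsingleton_or_nontrivial (H ⧸ M) with hs | hn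
      · intro x y; exact Subsingleton.elim _ _
      · obtain ⟨x, hx⟩ := exists_ne (1 : H ⧸ M)
        have hT : (Subgroup.zpowers x).comap (QuotientGroup.mk' M) = ⊤ := by
          apply hM.2
          refine lt_of_le_of_ne ?_ ?_
          · intro m hm
            simp only [Subgroup.mem_comap, QuotientGroup.mk'_apply]
            have : (QuotientGroup.mk m : H ⧸ M) = 1 := (QuotientGroup.eq_one_iff m).mpr hm
            rw [this]; exact one_mem _
          · intro heq
            obtain ⟨y, hy⟩ := QuotientGroup.mk'_surjective M x
            have hyT : y ∈ (Subgroup.zpowers x).comap (QuotientGroup.mk' M) := by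
              simp [Subgroup.mem_comap, hy, Subgroup.mem_zpowers x]
            rw [← heq] at hyT
            exact hx (by rw [← hy]; exact (QuotientGroup.eq_one_iff y).mpr hyT)
        have hzp : Subgroup.zpowers x = ⊤ := by
          have := congrArg (Subgroup.map (QuotientGroup.mk' M)) hT
          rwa [Subgroup.map_comap_eq_self_of_surjective (QuotientGroup.mk'_surjective M),
            Subgroup.map_top_of_surjective _ (QuotientGroup.mk'_surjective M)] at this
        have : IsCyclic (H ⧸ M) := ⟨⟨x, fun y => by
          have : y ∈ Subgroup.zpowers x := by rw [hzp]; exact Subgroup.mem_top y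
          exact this⟩⟩
        letI := IsCyclic.commGroup (α := H ⧸ M)
        intro a b; exact mul_comm a b
    rw [_root_.commutator_def, Subgroup.commutator_le]
    intro g₁ _ g₂ _
    have : (QuotientGroup.mk ⁅g₁, g₂⁆ : H ⧸ M) = 1 := by
      rw [show (QuotientGroup.mk ⁅g₁, g₂⁆ : H ⧸ M) = ⁅(QuotientGroup.mk g₁ : H ⧸ M),
        QuotientGroup.mk g₂⁆ by rfl]
      exact commutatorElement_eq_one_iff_commute.mpr (hQcomm _ _)
    exact (QuotientGroup.eq_one_iff _).mp this
  have : (⊤ : Subgroup H) ≤ M := by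
    rw [← h]; exact sup_le hKM hcomm
  exact hM.1 (top_le_iff.mp this)

/-- In a finite p-group, a conjugacy class C with |C| > 1 decomposes into at
least two orbits under conjugation by the subgroup H = ⟨C⟩. -/
theorem pGroup_conjClass_two_orbits {p : ℕ} [Fact p.Prime]
    {G : Type*} [Group G] [Finite G] (hp : IsPGroup p G)
    (g : G) (C : Set G) (hC : C = {x : G | IsConj g x}) (hC1 : 1 < Nat.card C) :
    2 ≤ Nat.card {O : Set G // ∃ a ∈ C,
      O = {b : G | ∃ h ∈ Subgroup.closure C, h * a * h⁻¹ = b}} := by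
  by_contra hcard
  push_neg at hcard
  set H : Subgroup G := Subgroup.closure C with hH
  have hgC : g ∈ C := by rw [hC]; exact IsConj.refl g
  have hgH : g ∈ H := Subgroup.subset_closure hgC
  -- Only one orbit: H acts transitively on C
  have htrans : ∀ b ∈ C, ∃ h ∈ H, h * g * h⁻¹ = b := by
    intro b hb
    have hsub : Subsingleton {O : Set G // ∃ a ∈ C,
        O = {b : G | ∃ h ∈ H, h * a * h⁻¹ = b}} := by
      rw [← Finite.card_le_one_iff_subsingleton]
      omega
    have heq := hsub.elim
      (⟨{x : G | ∃ h ∈ H, h * g * h⁻¹ = x}, g, hgC, rfl⟩ :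
        {O : Set G // ∃ a ∈ C, O = {b : G | ∃ h ∈ H, h * a * h⁻¹ = b}})
      ⟨{x : G | ∃ h ∈ H, h * b * h⁻¹ = x}, b, hb, rfl⟩
    have hbmem : b ∈ {x : G | ∃ h ∈ H, h * g * h⁻¹ = x} := by
      have := congrArg Subtype.val heq
      simp only at this
      rw [this]
      exact ⟨1, one_mem _, by group⟩
    exact hbmem
  -- H = ⟨g⟩ ⊔ [H, H]
  have hkey : H = Subgroup.closure {g} ⊔ ⁅H, H⁆ := by
    apply le_antisymm
    · rw [hH]
      apply Subgroup.closure_le _ |>.mpr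
      intro b hb
      obtain ⟨h, hh, hhb⟩ := htrans b hb
      have : b = ⁅h, g⁆ * g := by rw [commutatorElement_def, ← hhb]; group
      rw [this]
      exact mul_mem
        (le_sup_right (α := Subgroup G) (Subgroup.commutator_mem_commutator hh hgH))
        (le_sup_left (α := Subgroup G) (Subgroup.subset_closure rfl))
    · apply sup_le
      · exact (Subgroup.closure_le _).mpr (by simpa using hgH)
      · rw [Subgroup.commutator_le]
        intro g₁ h₁ g₂ h₂
        rw [commutatorElement_def]
        exact mul_mem (mul_mem (mul_mem h₁ h₂) (inv_mem h₁)) (inv_mem h₂)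
  -- Transfer to the group H and apply the nilpotent nongenerating lemma
  haveI : Group.IsNilpotent H := (hp.to_subgroup H).isNilpotent
  set g' : H := ⟨g, hgH⟩ with hg'
  have hmap : Subgroup.map H.subtype (Subgroup.closure {g'} ⊔ commutator H)
      = Subgroup.map H.subtype ⊤ := by
    rw [Subgroup.map_sup, _root_.commutator_def, Subgroup.map_commutator, ← MonoidHom.range_eq_map,
      H.range_subtype, MonoidHom.map_closure]
    have : H.subtype '' {g'} = {g} := by simp [hg']
    rw [this, ← hkey]
  have htop : Subgroup.closure {g'} ⊔ commutator H = ⊤ :=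
    Subgroup.map_injective H.subtype_injective hmap
  have hcyc : Subgroup.closure {g'} = ⊤ := aux_nongenerating htop
  -- H is cyclic, hence abelian, so all orbits are singletons: contradiction
  have hHcyc : IsCyclic H := ⟨⟨g', fun y => by
    have : y ∈ Subgroup.zpowers g' := by
      rw [Subgroup.zpowers_eq_closure, hcyc]; exact Subgroup.mem_top y
    exact this⟩⟩
  letI := hHcyc.commGroup
  -- get b ∈ C with b ≠ g
  haveI : Nontrivial C := Finite.one_lt_card_iff_nontrivial.mp hC1
  obtain ⟨⟨b, hb⟩, hbne⟩ := exists_ne (⟨g, hgC⟩ : C)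
  have hbg : b ≠ g := fun h => hbne (Subtype.ext h)
  obtain ⟨h, hh, hhb⟩ := htrans b hb
  have : (⟨h, hh⟩ : H) * g' * (⟨h, hh⟩ : H)⁻¹ = g' := by
    rw [mul_comm (⟨h, hh⟩ : H) g']; group
  have : h * g * h⁻¹ = g := congrArg Subtype.val this
  exact hbg (by rw [← hhb, this])
end

section
/- In a finite p-group G with conjugacy class C and H = ⟨C⟩, if a normal subgroup N of H meets every H-orbit of C, then N = H. -/
/-- In a finite p-group G with conjugacy class C and H = ⟨C⟩, if a normal
subgroup N of H meets every H-orbit of C, then N = H. -/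
theorem normal_meeting_all_orbits_eq {p : ℕ} [Fact p.Prime]
    {G : Type*} [Group G] [Finite G] (hp : IsPGroup p G) (g : G)
    (C : Set G) (hC : C = {x : G | IsConj g x})
    (H : Subgroup G) (hH : H = Subgroup.closure C)
    (N : Subgroup G) (hNH : N ≤ H)
    (hNormal : ∀ h ∈ H, ∀ n ∈ N, h * n * h⁻¹ ∈ N)
    (hmeet : ∀ a ∈ C, ∃ x ∈ {b : G | ∃ h ∈ H, h * a * h⁻¹ = b}, x ∈ N) :
    N = H := by
  -- Work in the group H.
  have hpH : IsPGroup p H := hp.to_subgroup H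
  have hnil : Group.IsNilpotent H := hpH.isNilpotent
  have hnc : NormalizerCondition H := normalizerCondition_of_isNilpotent
  by_contra hne
  -- N as a subgroup of H
  set N' : Subgroup H := N.subgroupOf H with hN'
  have hN'ne : N' ≠ ⊤ := by
    intro htop
    apply hne
    apply le_antisymm hNH
    intro x hx
    have : (⟨x, hx⟩ : H) ∈ N' := htop ▸ Subgroup.mem_top _
    exact this
  -- find a maximal subgroup M containing N'
  obtain ⟨M, hM, hNM⟩ := (eq_top_or_exists_le_coatom N').resolve_left hN'ne
  have hMnormal : M.Normal := Subgroup.NormalizerCondition.normal_of_coatom M hnc hM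
  -- Every element of C lies in M.map H.subtype
  have hCH : C ⊆ H := by
    rw [hH]; exact Subgroup.subset_closure
  have hCM : C ⊆ ((M.map H.subtype : Subgroup G) : Set G) := by
    intro a ha
    obtain ⟨x, ⟨h, hh, hxe⟩, hxN⟩ := hmeet a ha
    have haH : a ∈ H := hCH ha
    have hhinv : h⁻¹ ∈ H := inv_mem hh
    have hxH : x ∈ H := hNH hxN
    -- x ∈ N ≤ M (in H), and a = h⁻¹ * x * h
    have hxM : (⟨x, hxH⟩ : H) ∈ M := hNM hxN
    have : (⟨h⁻¹, hhinv⟩ : H) * ⟨x, hxH⟩ * (⟨h⁻¹, hhinv⟩ : H)⁻¹ ∈ M :=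
      hMnormal.conj_mem _ hxM _
    refine ⟨(⟨h⁻¹, hhinv⟩ : H) * ⟨x, hxH⟩ * (⟨h⁻¹, hhinv⟩ : H)⁻¹, this, ?_⟩
    simp only [Subgroup.coe_subtype]
    push_cast
    rw [← hxe]
    group
  -- Hence H = closure C ≤ M.map subtype, so M = ⊤, contradiction
  have hle : H ≤ M.map H.subtype :=
    hH.le.trans ((Subgroup.closure_le _).mpr hCM)
  have : M = ⊤ := by
    ext y
    simp only [Subgroup.mem_top, iff_true]
    obtain ⟨z, hzM, hze⟩ := hle y.2
    have hzy : z = y := Subtype.ext hze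
    rwa [hzy] at hzM
  exact hM.1 this
end

section
/- Every maximal subrack of a conjugacy class C in a finite p-group is the union of all but one of the H-orbits of C, where H = ⟨C⟩. -/
/-- A subset of a conjugacy class `C` is a subrack if it is closed under
conjugation `a ▷ b = a b a⁻¹`. -/
def IsSubrackOf {G : Type*} [Group G] (S C : Set G) : Prop :=
  S ⊆ C ∧ ∀ a ∈ S, ∀ b ∈ S, a * b * a⁻¹ ∈ S

/-- In a finite group, a subrack is also closed under inverse conjugation. -/
lemma subrack_inv_conj {G : Type*} [Group G] [Finite G] {S C : Set G}
    (hS : IsSubrackOf S C) : ∀ a ∈ S, ∀ b ∈ S, a⁻¹ * b * a ∈ S := by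
  intro a ha b hb
  have hinj : Function.Injective (fun m : S => (⟨a * m * a⁻¹, hS.2 a ha m m.2⟩ : S)) := by
    intro x y hxy
    have : a * (x : G) * a⁻¹ = a * (y : G) * a⁻¹ := congrArg Subtype.val hxy
    ext
    exact mul_left_cancel (mul_right_cancel this)
  have hsurj := Finite.surjective_of_injective hinj
  obtain ⟨c, hc⟩ := hsurj ⟨b, hb⟩
  have : a * (c : G) * a⁻¹ = b := congrArg Subtype.val hc
  have : (c : G) = a⁻¹ * b * a := by rw [← this]; group
  rw [← this]; exact c.2

/-- A subrack is stable under conjugation by the subgroup it generates. -/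
lemma subrack_closure_conj {G : Type*} [Group G] [Finite G] {S C : Set G}
    (hS : IsSubrackOf S C) :
    ∀ k ∈ Subgroup.closure S, ∀ b ∈ S, k * b * k⁻¹ ∈ S := by
  intro k hk
  induction hk using Subgroup.closure_induction with
  | mem x hx =>
      intro b hb; exact hS.2 x hx b hb
  | one => intro b hb; simpa using hb
  | mul x y hx hy ihx ihy =>
      intro b hb
      have := ihx (y * b * y⁻¹) (ihy b hb)
      have e : x * (y * b * y⁻¹) * x⁻¹ = (x * y) * b * (x * y)⁻¹ := by group
      rwa [e] at this
  | inv x hx ih =>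
      intro b hb
      -- need x⁻¹ * b * x⁻¹⁻¹ ∈ S
      have : ∀ c ∈ S, x⁻¹ * c * x ∈ S := by
        -- conjugation by x is a bijection on S
        have hx' : ∀ c ∈ S, x * c * x⁻¹ ∈ S := ih
        have hinj : Function.Injective (fun m : S => (⟨x * m * x⁻¹, hx' m m.2⟩ : S)) := by
          intro u v huv
          have : x * (u : G) * x⁻¹ = x * (v : G) * x⁻¹ := congrArg Subtype.val huv
          ext
          exact mul_left_cancel (mul_right_cancel this)
        have hsurj := Finite.surjective_of_injective hinj
        intro c hc
        obtain ⟨d, hd⟩ := hsurj ⟨c, hc⟩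
        have : x * (d : G) * x⁻¹ = c := congrArg Subtype.val hd
        have : (d : G) = x⁻¹ * c * x := by rw [← this]; group
        rw [← this]; exact d.2
      have := this b hb
      simpa using this

/-- In a finite p-group, any proper subgroup is contained in a proper normal
subgroup. -/
lemma exists_proper_normal_above {G : Type*} [Group G] [Finite G] {p : ℕ}
    [Fact p.Prime] (h : IsPGroup p G) (K : Subgroup G) (hK : K ≠ ⊤) :
    ∃ N : Subgroup G, K ≤ N ∧ N ≠ ⊤ ∧ N.Normal := by
  have : Group.IsNilpotent G := h.isNilpotent
  have hnc := normalizerCondition_of_isNilpotent (G := G)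
  rcases (eq_top_or_exists_le_coatom K).resolve_left hK with ⟨N, hN, hKN⟩
  exact ⟨N, hKN, hN.1, Subgroup.NormalizerCondition.normal_of_coatom N hnc hN⟩

/-- Version for subgroups of a subgroup `H` of an ambient finite p-group. -/
lemma exists_proper_normal_between {G : Type*} [Group G] [Finite G] {p : ℕ}
    [Fact p.Prime] (hp : IsPGroup p G) (H K : Subgroup G) (hKH : K ≤ H)
    (hne : K ≠ H) :
    ∃ N : Subgroup G, K ≤ N ∧ N ≤ H ∧ (∃ w ∈ H, w ∉ N) ∧
      ∀ v ∈ H, ∀ x ∈ N, v * x * v⁻¹ ∈ N := by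
  have hpH : IsPGroup p H := hp.to_subgroup H
  have hK' : K.subgroupOf H ≠ ⊤ := by
    intro htop
    exact hne (le_antisymm hKH (Subgroup.subgroupOf_eq_top.mp htop))
  obtain ⟨N', hKN', hN'top, hN'norm⟩ := exists_proper_normal_above hpH _ hK'
  refine ⟨N'.map H.subtype, ?_, ?_, ?_, ?_⟩
  · intro k hk
    exact ⟨⟨k, hKH hk⟩, hKN' hk, rfl⟩
  · intro x hx
    rcases hx with ⟨y, _, rfl⟩
    exact y.2
  · have : ∃ y : H, y ∉ N' := by
      by_contra hcon
      push_neg at hcon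
      exact hN'top ((Subgroup.eq_top_iff' N').mpr hcon)
    rcases this with ⟨y, hy⟩
    refine ⟨(y : G), y.2, ?_⟩
    rintro ⟨z, hz, hzy⟩
    exact hy (by rwa [show z = y from Subtype.ext hzy] at hz)
  · rintro v hv x ⟨y, hy, rfl⟩
    refine ⟨⟨v, hv⟩ * y * ⟨v, hv⟩⁻¹, hN'norm.conj_mem y hy ⟨v, hv⟩, rfl⟩

/-- Every maximal subrack of a conjugacy class C in a finite p-group is the
union of all but one of the H-orbits of C, where H = ⟨C⟩; conversely every
such orbit complement is a maximal subrack. -/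
theorem maximal_subrack_iff_orbit_complement {p : ℕ} [Fact p.Prime]
    {G : Type*} [Group G] [Finite G] (hp : IsPGroup p G) (g : G)
    (C : Set G) (hC : C = {x : G | IsConj g x}) (hC1 : 1 < Nat.card C)
    (H : Subgroup G) (hH : H = Subgroup.closure C)
    (M : Set G) :
    (IsSubrackOf M C ∧ M ≠ C ∧
        ∀ T : Set G, IsSubrackOf T C → T ≠ C → M ⊆ T → M = T) ↔
      ∃ a ∈ C, M = C \ {b : G | ∃ h ∈ H, h * a * h⁻¹ = b} := by
  -- notation for orbits
  set Orb : G → Set G := fun a => {b : G | ∃ h ∈ H, h * a * h⁻¹ = b} with hOrb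
  -- C is closed under conjugation by arbitrary elements
  have Cconj : ∀ v : G, ∀ x ∈ C, v * x * v⁻¹ ∈ C := by
    intro v x hx
    rw [hC] at hx ⊢
    exact hx.trans (isConj_iff.mpr ⟨v, rfl⟩)
  -- C ⊆ H
  have CsubH : ∀ x ∈ C, x ∈ H := by
    intro x hx; rw [hH]; exact Subgroup.subset_closure hx
  -- orbit basics
  have self_mem_orb : ∀ a : G, a ∈ Orb a := fun a => ⟨1, one_mem H, by group⟩
  have orb_subset : ∀ a ∈ C, Orb a ⊆ C := by
    rintro a ha b ⟨h, _, rfl⟩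
    exact Cconj h a ha
  have orb_shift : ∀ a x : G, x ∈ Orb a → Orb a ⊆ Orb x := by
    rintro a x ⟨h₀, hh₀, rfl⟩ b ⟨h, hh, rfl⟩
    refine ⟨h * h₀⁻¹, mul_mem hh (inv_mem hh₀), by group⟩
  -- complements of orbits are subracks
  have subrackCompl : ∀ a ∈ C, IsSubrackOf (C \ Orb a) C := by
    intro a ha
    refine ⟨Set.diff_subset, ?_⟩
    rintro u ⟨huC, huO⟩ v ⟨hvC, hvO⟩
    refine ⟨Cconj u v hvC, ?_⟩
    rintro ⟨h, hh, heq⟩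
    refine hvO ⟨u⁻¹ * h, mul_mem (inv_mem (CsubH u huC)) hh, ?_⟩
    have : v = u⁻¹ * (u * v * u⁻¹) * u := by group
    rw [this, ← heq]; group
  have complNe : ∀ a ∈ C, C \ Orb a ≠ C := by
    intro a ha hEq
    have : a ∈ C \ Orb a := by rw [hEq]; exact ha
    exact this.2 (self_mem_orb a)
  constructor
  · rintro ⟨hM, hMne, hmax⟩
    -- key step: if M is H-stable then it is an orbit complement
    have key : (∀ v ∈ H, ∀ m ∈ M, v * m * v⁻¹ ∈ M) →
        ∃ a ∈ C, M = C \ Orb a := by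
      intro hstab
      have hss : M ⊂ C := lt_of_le_of_ne hM.1 hMne
      obtain ⟨a, haC, haM⟩ := Set.exists_of_ssubset hss
      refine ⟨a, haC, ?_⟩
      have hsub : M ⊆ C \ Orb a := by
        intro m hm
        refine ⟨hM.1 hm, ?_⟩
        rintro ⟨h, hh, heq⟩
        refine haM ?_
        have := hstab h⁻¹ (inv_mem hh) m hm
        have e : h⁻¹ * m * h⁻¹⁻¹ = a := by rw [← heq]; group
        rwa [e] at this
      exact hmax _ (subrackCompl a haC) (complNe a haC) hsub
    set K : Subgroup G := Subgroup.closure M with hK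
    have hKH : K ≤ H := by
      rw [hH]; exact Subgroup.closure_mono hM.1
    by_cases hKeq : K = H
    · refine key ?_
      intro v hv m hm
      exact subrack_closure_conj hM v (by rw [← hKeq] at hv; exact hv) m hm
    · obtain ⟨N, hKN, hNH, ⟨w, hwH, hwN⟩, hNnorm⟩ :=
        exists_proper_normal_between hp H K hKH hKeq
      have hTsub : IsSubrackOf (C ∩ ↑N) C := by
        refine ⟨Set.inter_subset_left, ?_⟩
        rintro u ⟨huC, huN⟩ v ⟨hvC, hvN⟩
        exact ⟨Cconj u v hvC, hNnorm u (CsubH u huC) v hvN⟩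
      have hTne : C ∩ ↑N ≠ C := by
        intro hEq
        have hCN : C ⊆ ↑N := by
          intro x hx
          have hx' : x ∈ C ∩ ↑N := by rw [hEq]; exact hx
          exact hx'.2
        have : H ≤ N := by rw [hH]; exact Subgroup.closure_le N |>.mpr hCN
        exact hwN (this hwH)
      have hMT : M ⊆ C ∩ ↑N := fun m hm =>
        ⟨hM.1 hm, hKN (Subgroup.subset_closure hm)⟩
      have hMeq : M = C ∩ ↑N := hmax _ hTsub hTne hMT
      refine key ?_
      intro v hv m hm
      rw [hMeq] at hm ⊢
      exact ⟨Cconj v m hm.1, hNnorm v hv m hm.2⟩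
  · rintro ⟨a, haC, rfl⟩
    refine ⟨subrackCompl a haC, complNe a haC, ?_⟩
    intro T hT hTne hMT
    refine le_antisymm hMT ?_
    intro x hx
    refine ⟨hT.1 hx, ?_⟩
    intro hxO
    -- x ∈ T ∩ Orb a : derive contradiction
    set K : Subgroup G := Subgroup.closure T with hK
    have hKH : K ≤ H := by rw [hH]; exact Subgroup.closure_mono hT.1
    by_cases hKeq : K = H
    · -- T is H-stable, so Orb a ⊆ T, so T = C, contradiction
      have hstab : ∀ v ∈ H, ∀ t ∈ T, v * t * v⁻¹ ∈ T := by
        intro v hv t ht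
        exact subrack_closure_conj hT v (by rw [← hKeq] at hv; exact hv) t ht
      have hOT : Orb a ⊆ T := by
        intro b hb
        rcases orb_shift a x hxO hb with ⟨h, hh, rfl⟩
        exact hstab h hh x hx
      have : C ⊆ T := by
        intro c hc
        by_cases hcO : c ∈ Orb a
        · exact hOT hcO
        · exact hMT ⟨hc, hcO⟩
      exact hTne (le_antisymm hT.1 this)
    · obtain ⟨N, hKN, hNH, ⟨w, hwH, hwN⟩, hNnorm⟩ :=
        exists_proper_normal_between hp H K hKH hKeq
      have hTN : T ⊆ ↑N := fun t ht => hKN (Subgroup.subset_closure ht)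
      have hCN : C ⊆ ↑N := by
        intro c hc
        by_cases hcO : c ∈ Orb a
        · rcases orb_shift a x hxO hcO with ⟨h, hh, rfl⟩
          exact hNnorm h hh x (hTN hx)
        · exact hTN (hMT ⟨hc, hcO⟩)
      have : H ≤ N := by rw [hH]; exact Subgroup.closure_le N |>.mpr hCN
      exact hwN (this hwH)
end

section
/- For a conjugacy class C in a finite p-group with H = ⟨C⟩ and S a proper subrack of C, the union S̄ of H-orbits of elements of S is also a proper subset of C. -/
/-- For a conjugacy class C in a finite p-group with H = ⟨C⟩ and S a proper
subrack of C, the union S̄ of H-orbits of elements of S is a proper subset of C. -/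
theorem orbit_closure_proper {p : ℕ} [Fact p.Prime]
    {G : Type*} [Group G] [Finite G] (hp : IsPGroup p G) (g : G)
    (C : Set G) (hC : C = {x : G | IsConj g x}) (hC1 : 1 < Nat.card C)
    (H : Subgroup G) (hH : H = Subgroup.closure C)
    (S : Set G) (hS : IsSubrackOf S C) (hSC : S ≠ C) :
    {b : G | ∃ a ∈ S, ∃ h ∈ H, h * a * h⁻¹ = b} ≠ C := by
  subst hH
  intro hbar
  apply hSC
  set K : Subgroup G := Subgroup.closure S with hK
  -- S is stable under conjugation by K
  have claimA : ∀ k ∈ K, ∀ b ∈ S, k * b * k⁻¹ ∈ S := by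
    intro k hk
    induction hk using Subgroup.closure_induction with
    | mem x hx => exact hS.2 x hx
    | one => intro b hb; simpa using hb
    | mul x y hx hy px py =>
        intro b hb
        have := px _ (py b hb)
        simpa [mul_assoc] using this
    | inv x hx px =>
        intro b hb
        have hmaps : (fun b => x * b * x⁻¹) '' S ⊆ S := by
          rintro _ ⟨c, hc, rfl⟩; exact px c hc
        have hinj : Set.InjOn (fun b => x * b * x⁻¹) S := by
          intro a _ c _ h
          have : x * a * x⁻¹ = x * c * x⁻¹ := h
          group at this
          simpa using mul_left_cancel (mul_right_cancel this)
        have himg : (fun b => x * b * x⁻¹) '' S = S := by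
          apply Set.eq_of_subset_of_ncard_le hmaps
          rw [Set.ncard_image_of_injOn hinj]
        rw [← himg] at hb
        obtain ⟨c, hc, hcb⟩ := hb
        have : x⁻¹ * b * x⁻¹⁻¹ = c := by
          rw [← hcb]; group
        rw [this]; exact hc
  have hSK : S ⊆ (K : Set G) := Subgroup.subset_closure
  have hKH : K ≤ Subgroup.closure C := Subgroup.closure_mono hS.1
  -- K = ⟨C⟩
  have hKeq : K = Subgroup.closure C := by
    by_contra hne
    have hKH' : K.subgroupOf (Subgroup.closure C) ≠ ⊤ := by
      intro h
      exact hne (le_antisymm hKH (Subgroup.subgroupOf_eq_top.mp h))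
    obtain ⟨M, hM, hKM⟩ :=
      (IsCoatomic.eq_top_or_exists_le_coatom
        (K.subgroupOf (Subgroup.closure C))).resolve_left hKH'
    have : Group.IsNilpotent (Subgroup.closure C) :=
      (hp.to_subgroup (Subgroup.closure C)).isNilpotent
    have hMnorm : M.Normal :=
      Subgroup.NormalizerCondition.normal_of_coatom M normalizerCondition_of_isNilpotent hM
    -- every element of C (in ⟨C⟩) lies in M
    have hCM : ∀ x : Subgroup.closure C, (x : G) ∈ C → x ∈ M := by
      intro x hx
      obtain ⟨a, ha, h, hh, heq⟩ :
          (x : G) ∈ {b : G | ∃ a ∈ S, ∃ h ∈ Subgroup.closure C, h * a * h⁻¹ = b} := by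
        rw [hbar]; exact hx
      have haH : a ∈ Subgroup.closure C := hKH (hSK ha)
      have haM : (⟨a, haH⟩ : Subgroup.closure C) ∈ M :=
        hKM (Subgroup.mem_subgroupOf.mpr (hSK ha))
      have : x = (⟨h, hh⟩ : Subgroup.closure C) * ⟨a, haH⟩ * (⟨h, hh⟩ : Subgroup.closure C)⁻¹ := by
        ext; simpa using heq.symm
      rw [this]
      exact hMnorm.conj_mem _ haM _
    -- hence everything lies in M, contradiction
    have : (⊤ : Subgroup (Subgroup.closure C)) ≤ M := by
      rw [← Subgroup.closure_closure_coe_preimage (k := C)]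
      exact (Subgroup.closure_le M).mpr (fun x hx => hCM x hx)
    exact hM.1 (le_antisymm le_top this)
  -- conclude S = C
  apply le_antisymm hS.1
  intro c hc
  rw [← hbar] at hc
  obtain ⟨a, ha, h, hh, heq⟩ := hc
  rw [← heq]
  exact claimA h (hKeq ▸ hh) a ha
end

section
/- If M is a maximal subrack of a conjugacy class C in a finite p-group meeting every H-orbit of C (H = ⟨C⟩), then the normalizer N_H(M) = {h ∈ H : hMh⁻¹ = M} is a proper non-normal subgroup of H. -/
private lemma conj_image_comp {G : Type*} [Group G] (a b : G) (M : Set G) :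
    (fun x => a * x * a⁻¹) '' ((fun x => b * x * b⁻¹) '' M) =
      (fun x => (a * b) * x * (a * b)⁻¹) '' M := by
  rw [Set.image_image]
  apply Set.image_congr'
  intro x
  group

/-- If M is a maximal subrack of a conjugacy class C in a finite p-group
meeting every H-orbit of C (H = ⟨C⟩), then the normalizer
N_H(M) = {h ∈ H : hMh⁻¹ = M} is a proper non-normal subgroup of H. -/
theorem normalizer_of_maximal_subrack {p : ℕ} [Fact p.Prime]
    {G : Type*} [Group G] [Finite G] (hp : IsPGroup p G) (g : G)
    (C : Set G) (hC : C = {x : G | IsConj g x}) (hC1 : 1 < Nat.card C)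
    (H : Subgroup G) (hH : H = Subgroup.closure C)
    (M : Set G)
    (hMsub : IsSubrackOf M C) (hMne : M ≠ C)
    (hMmax : ∀ T : Set G, IsSubrackOf T C → T ≠ C → M ⊆ T → M = T)
    (hmeet : ∀ a ∈ C, ∃ x ∈ M, ∃ h ∈ H, h * a * h⁻¹ = x)
    (NHM : Set G)
    (hNHM : NHM = {h : G | h ∈ H ∧ (fun x => h * x * h⁻¹) '' M = M}) :
    NHM ⊂ (H : Set G) ∧
      ¬ (∀ h ∈ H, ∀ n ∈ NHM, h * n * h⁻¹ ∈ NHM) := by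
  obtain ⟨hMC, hMrack⟩ := hMsub
  -- Elements of `M` stabilize `M` under conjugation.
  have hconjM : ∀ m ∈ M, (fun x => m * x * m⁻¹) '' M = M := by
    intro m hm
    have hinj : Function.Injective (fun x : G => m * x * m⁻¹) := by
      intro a b h
      simpa using mul_left_cancel (mul_right_cancel h)
    have hsub : (fun x => m * x * m⁻¹) '' M ⊆ M := by
      rintro _ ⟨b, hb, rfl⟩
      exact hMrack m hm b hb
    exact (Set.eq_of_subset_of_ncard_le hsub
      (le_of_eq (Set.ncard_image_of_injective M hinj).symm) (Set.toFinite M)).symm ▸ rfl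
  have hCH : C ⊆ (H : Set G) := by
    rw [hH]; exact Subgroup.subset_closure
  have hMN : M ⊆ NHM := by
    intro m hm
    rw [hNHM]
    exact ⟨hCH (hMC hm), hconjM m hm⟩
  -- If all of `H` stabilized `M`, then `M = C`, a contradiction.
  have hne : ¬ (∀ h ∈ H, (fun x => h * x * h⁻¹) '' M = M) := by
    intro hall
    apply hMne
    apply Set.Subset.antisymm hMC
    intro a ha
    obtain ⟨x, hx, h, hh, hhx⟩ := hmeet a ha
    have h1 := hall h⁻¹ (H.inv_mem hh)
    have hmem : a ∈ (fun y => h⁻¹ * y * h⁻¹⁻¹) '' M := by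
      refine ⟨x, hx, ?_⟩
      rw [← hhx]; group
    rwa [h1] at hmem
  have hNsubH : NHM ⊆ (H : Set G) := by
    rw [hNHM]; exact fun h hh => hh.1
  have hproper : NHM ⊂ (H : Set G) := by
    refine ⟨hNsubH, fun hHsub => ?_⟩
    refine hne fun h hh => ?_
    have hmem := hHsub hh
    rw [hNHM] at hmem
    exact hmem.2
  refine ⟨hproper, fun hnorm => ?_⟩
  -- Under the normality assumption, every element of `C` is in `NHM`.
  have hCN : ∀ a ∈ C, (fun x => a * x * a⁻¹) '' M = M := by
    intro a ha
    obtain ⟨x, hx, h, hh, hhx⟩ := hmeet a ha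
    have hx' := hnorm h⁻¹ (H.inv_mem hh) x (hMN hx)
    have ha' : a = h⁻¹ * x * h⁻¹⁻¹ := by rw [← hhx]; group
    rw [hNHM] at hx'
    exact (ha' ▸ hx'.2)
  -- Hence all of `H` stabilizes `M` by induction on the closure.
  apply hne
  intro h hh
  rw [hH] at hh
  induction hh using Subgroup.closure_induction with
  | mem x hx => exact hCN x hx
  | one => simp
  | mul x y hx hy px py => rw [← conj_image_comp, py, px]
  | inv x hx px =>
    have h2 := conj_image_comp x⁻¹ x M
    rw [px] at h2
    simpa using h2
end

section
/- If P is a finite poset with a closure operator φ (monotone, increasing, idempotent), then the order complexes of P and of the image φ(P) are homotopy equivalent. -/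
open scoped BigOperators

/-- The geometric realization of the order complex of a finite poset `α`:
points of the standard simplex on `α` whose support is a chain in `α`. -/
def orderComplexSpace (α : Type*) [PartialOrder α] [Fintype α] : Set (α → ℝ) :=
  {f | (∀ x, 0 ≤ f x) ∧ (∑ x, f x) = 1 ∧
    ∀ x y, f x ≠ 0 → f y ≠ 0 → x ≤ y ∨ y ≤ x}

noncomputable section OCAux

open Classical Finset

variable {P : Type*} [PartialOrder P] [Fintype P]

/-- Pushforward of mass along `φ`. -/
def ocPush (φ : P → P) (f : P → ℝ) (y : Set.range φ) : ℝ :=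
  ∑ x ∈ univ.filter (fun x => φ x = (y : P)), f x

/-- Extension by zero. -/
def ocExt (φ : P → P) (g : Set.range φ → ℝ) (x : P) : ℝ :=
  if h : x ∈ Set.range φ then g ⟨x, h⟩ else 0

/-- Mass strictly above `x`. -/
def ocS (f : P → ℝ) (x : P) : ℝ := ∑ z ∈ univ.filter (fun z => x < z), f z

/-- The amount of mass of `x` which has moved to `φ x` at time `t`. -/
def ocB (t : ℝ) (f : P → ℝ) (x : P) : ℝ := min (f x) (max 0 (t - ocS f x))

/-- The homotopy map. -/
def ocH (φ : P → P) (t : ℝ) (f : P → ℝ) (y : P) : ℝ :=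
  (f y - ocB t f y) + ∑ x ∈ univ.filter (fun x => φ x = y), ocB t f x

variable {φ : P → P} {f : P → ℝ} {t : ℝ}

lemma ocS_nonneg (hf : ∀ x, 0 ≤ f x) (x : P) : 0 ≤ ocS f x :=
  Finset.sum_nonneg fun z _ => hf z

lemma ocB_nonneg (hf : ∀ x, 0 ≤ f x) (x : P) : 0 ≤ ocB t f x :=
  le_min (hf x) (le_max_left 0 _)

lemma ocB_le (x : P) : ocB t f x ≤ f x := min_le_left _ _

lemma ocS_add_le (hf : ∀ x, 0 ≤ f x) (hsum : ∑ x, f x = 1) (x : P) :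
    f x + ocS f x ≤ 1 := by
  have hx : x ∉ univ.filter (fun z => x < z) := by simp
  have : f x + ocS f x = ∑ z ∈ insert x (univ.filter (fun z => x < z)), f z := by
    rw [Finset.sum_insert hx, ocS]
  rw [this, ← hsum]
  exact Finset.sum_le_sum_of_subset_of_nonneg (fun z _ => mem_univ z)
    (fun z _ _ => hf z)

lemma ocS_lt_chain (hf : ∀ x, 0 ≤ f x) {x y : P} (h : y < x) :
    f x + ocS f x ≤ ocS f y := by
  have hx : x ∉ univ.filter (fun z => x < z) := by simp
  have : f x + ocS f x = ∑ z ∈ insert x (univ.filter (fun z => x < z)), f z := by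
    rw [Finset.sum_insert hx, ocS]
  rw [this]
  refine Finset.sum_le_sum_of_subset_of_nonneg ?_ (fun z _ _ => hf z)
  intro z hz
  rcases Finset.mem_insert.mp hz with rfl | hz
  · simpa using h
  · simp only [mem_filter, mem_univ, true_and] at hz ⊢
    exact h.trans hz

lemma ocB_eq_zero {y : P} (h0 : f y = 0) : ocB t f y = 0 :=
  le_antisymm (by rw [ocB, h0]; exact min_le_left 0 _) (le_min h0.ge (le_max_left 0 _))

lemma ocB_ne_imp {y : P} (hb : ocB t f y ≠ 0) : f y ≠ 0 :=
  fun h0 => hb (ocB_eq_zero h0)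

lemma ocA_ne_imp {y : P} (ha : f y - ocB t f y ≠ 0) : f y ≠ 0 :=
  fun h0 => ha (by rw [h0, ocB_eq_zero h0]; ring)

/-- Key comparability lemma: an "unmoved" vertex is below any "moving" vertex. -/
lemma ocKey (hf : ∀ x, 0 ≤ f x)
    (hchain : ∀ x y, f x ≠ 0 → f y ≠ 0 → x ≤ y ∨ y ≤ x)
    {x y : P} (hx : f x - ocB t f x ≠ 0) (hy : ocB t f y ≠ 0) : x ≤ y := by
  have hbx : ocB t f x < f x := lt_of_le_of_ne (ocB_le x) fun h => hx (by rw [h]; ring)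
  have hmaxx : max 0 (t - ocS f x) < f x := by
    by_contra h
    push_neg at h
    rw [ocB, min_eq_left h] at hbx
    exact lt_irrefl _ hbx
  have htx : t - ocS f x < f x := lt_of_le_of_lt (le_max_right _ _) hmaxx
  have hfx : f x ≠ 0 := by
    intro h0
    rw [h0] at hmaxx
    exact absurd hmaxx (not_lt.mpr (le_max_left _ _))
  have hby : 0 < ocB t f y := lt_of_le_of_ne (ocB_nonneg hf y) (Ne.symm hy)
  have hfy : f y ≠ 0 := ocB_ne_imp hy
  have hty : 0 < t - ocS f y := by
    by_contra h
    push_neg at h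
    have : max 0 (t - ocS f y) = 0 := max_eq_left h
    have : ocB t f y ≤ 0 := le_trans (min_le_right _ _) this.le
    exact absurd hby (not_lt.mpr this)
  rcases hchain x y hfx hfy with h | h
  · exact h
  · rcases eq_or_lt_of_le h with heq | hlt
    · exact le_of_eq heq.symm
    · exfalso
      have h1 : f x + ocS f x ≤ ocS f y := ocS_lt_chain hf hlt
      linarith

lemma ocH_sum (hsum : ∑ x, f x = 1) : ∑ y, ocH φ t f y = 1 := by
  unfold ocH
  rw [Finset.sum_add_distrib, Finset.sum_sub_distrib]
  have := Finset.sum_fiberwise (univ : Finset P) φ (ocB t f)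
  rw [this, hsum]
  ring

lemma ocH_nonneg (hf : ∀ x, 0 ≤ f x) (y : P) : 0 ≤ ocH φ t f y :=
  add_nonneg (sub_nonneg.mpr (ocB_le y)) (Finset.sum_nonneg fun x _ => ocB_nonneg hf x)

lemma ocH_support (hf : ∀ x, 0 ≤ f x) {y : P} (h : ocH φ t f y ≠ 0) :
    (f y - ocB t f y ≠ 0) ∨ ∃ x, φ x = y ∧ ocB t f x ≠ 0 := by
  by_contra hc
  push_neg at hc
  obtain ⟨h1, h2⟩ := hc
  apply h
  unfold ocH
  rw [h1, Finset.sum_eq_zero, add_zero]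
  intro x hx
  simp only [mem_filter, mem_univ, true_and] at hx
  exact h2 x hx

lemma ocH_mem (hincr : ∀ x : P, x ≤ φ x) (hmono : ∀ x y : P, x ≤ y → φ x ≤ φ y)
    (hf : f ∈ orderComplexSpace P) : ocH φ t f ∈ orderComplexSpace P := by
  obtain ⟨hpos, hsum, hchain⟩ := hf
  refine ⟨ocH_nonneg hpos, ocH_sum hsum, ?_⟩
  intro y1 y2 h1 h2
  rcases ocH_support hpos h1 with ha1 | ⟨x1, rfl, hb1⟩ <;>
    rcases ocH_support hpos h2 with ha2 | ⟨x2, rfl, hb2⟩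
  · exact hchain y1 y2 (ocA_ne_imp ha1) (ocA_ne_imp ha2)
  · exact Or.inl ((ocKey hpos hchain ha1 hb2).trans (hincr x2))
  · exact Or.inr ((ocKey hpos hchain ha2 hb1).trans (hincr x1))
  · rcases hchain x1 x2 (ocB_ne_imp hb1) (ocB_ne_imp hb2) with h | h
    · exact Or.inl (hmono _ _ h)
    · exact Or.inr (hmono _ _ h)


lemma ocRange_fixed (hidem : ∀ x : P, φ (φ x) = φ x) {y : P}
    (hy : y ∈ Set.range φ) : φ y = y := by
  obtain ⟨w, rfl⟩ := hy; exact hidem w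

section WithInstance

variable [Fintype (Set.range φ)]

lemma ocPush_sum (hsum : ∑ x, f x = 1) : ∑ y : Set.range φ, ocPush φ f y = 1 := by
  have h := Finset.sum_fiberwise (univ : Finset P)
    (fun x => (⟨φ x, ⟨x, rfl⟩⟩ : Set.range φ)) f
  rw [← hsum, ← h]
  refine Finset.sum_congr rfl fun y _ => ?_
  unfold ocPush
  refine Finset.sum_congr ?_ fun _ _ => rfl
  ext x
  simp [Subtype.ext_iff]

lemma ocPush_mem (hmono : ∀ x y : P, x ≤ y → φ x ≤ φ y)
    (hf : f ∈ orderComplexSpace P) :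
    ocPush φ f ∈ orderComplexSpace (Set.range φ) := by
  obtain ⟨hpos, hsum, hchain⟩ := hf
  refine ⟨fun y => Finset.sum_nonneg fun x _ => hpos x, ocPush_sum hsum, ?_⟩
  intro y1 y2 h1 h2
  obtain ⟨x1, hx1, hfx1⟩ := Finset.exists_ne_zero_of_sum_ne_zero h1
  obtain ⟨x2, hx2, hfx2⟩ := Finset.exists_ne_zero_of_sum_ne_zero h2
  simp only [mem_filter, mem_univ, true_and] at hx1 hx2
  rcases hchain x1 x2 hfx1 hfx2 with h | h
  · exact Or.inl (by rw [← Subtype.coe_le_coe, ← hx1, ← hx2]; exact hmono _ _ h)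
  · exact Or.inr (by rw [← Subtype.coe_le_coe, ← hx1, ← hx2]; exact hmono _ _ h)

variable {g : Set.range φ → ℝ}

lemma ocExt_sum (hsum : ∑ y : Set.range φ, g y = 1) : ∑ x, ocExt φ g x = 1 := by
  have h1 : ∑ x ∈ univ.filter (fun x => x ∈ Set.range φ), ocExt φ g x
      = ∑ y : Set.range φ, ocExt φ g ↑y :=
    Finset.sum_subtype _ (fun x => by simp) (ocExt φ g)
  rw [← Finset.sum_filter_of_ne (p := fun x => x ∈ Set.range φ)
    (fun x _ hx => by by_contra h; exact hx (dif_neg h)), h1, ← hsum]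
  refine Finset.sum_congr rfl fun y _ => ?_
  unfold ocExt
  rw [dif_pos y.2]

lemma ocExt_mem (hg : g ∈ orderComplexSpace (Set.range φ)) :
    ocExt φ g ∈ orderComplexSpace P := by
  obtain ⟨hpos, hsum, hchain⟩ := hg
  refine ⟨?_, ocExt_sum hsum, ?_⟩
  · intro x
    unfold ocExt
    by_cases h : x ∈ Set.range φ
    · rw [dif_pos h]; exact hpos _
    · rw [dif_neg h]
  · intro x1 x2 h1 h2
    unfold ocExt at h1 h2
    by_cases m1 : x1 ∈ Set.range φ
    · by_cases m2 : x2 ∈ Set.range φ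
      · rw [dif_pos m1] at h1
        rw [dif_pos m2] at h2
        rcases hchain _ _ h1 h2 with h | h
        · exact Or.inl (Subtype.coe_le_coe.mpr h)
        · exact Or.inr (Subtype.coe_le_coe.mpr h)
      · rw [dif_neg m2] at h2; exact absurd rfl h2
    · rw [dif_neg m1] at h1; exact absurd rfl h1

lemma ocPush_ocExt (hidem : ∀ x : P, φ (φ x) = φ x) (y : Set.range φ) :
    ocPush φ (ocExt φ g) y = g y := by
  unfold ocPush
  rw [Finset.sum_eq_single_of_mem (y : P)
    (by simp [ocRange_fixed hidem y.2])]
  · unfold ocExt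
    rw [dif_pos y.2]
  · intro x hx hne
    simp only [mem_filter, mem_univ, true_and] at hx
    unfold ocExt
    by_cases h : x ∈ Set.range φ
    · exact absurd (by rw [← ocRange_fixed hidem h, hx]) hne
    · exact dif_neg h

end WithInstance

lemma ocB_zero (hpos : ∀ x, 0 ≤ f x) (x : P) : ocB 0 f x = 0 := by
  unfold ocB
  rw [max_eq_left (by linarith [ocS_nonneg hpos x]), min_eq_right (hpos x)]

lemma ocH_zero (hpos : ∀ x, 0 ≤ f x) : ocH φ 0 f = f := by
  funext y
  unfold ocH
  rw [ocB_zero hpos, Finset.sum_eq_zero fun x _ => ocB_zero hpos x]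
  ring

lemma ocB_one (hpos : ∀ x, 0 ≤ f x) (hsum : ∑ x, f x = 1) (x : P) :
    ocB 1 f x = f x := by
  have h := ocS_add_le hpos hsum x
  unfold ocB
  rw [max_eq_right (by linarith [hpos x]), min_eq_left (by linarith)]

lemma ocH_one [Fintype (Set.range φ)] (hpos : ∀ x, 0 ≤ f x)
    (hsum : ∑ x, f x = 1) : ocH φ 1 f = ocExt φ (ocPush φ f) := by
  funext y
  unfold ocH
  rw [ocB_one hpos hsum, sub_self, zero_add,
    Finset.sum_congr rfl fun x _ => ocB_one hpos hsum x]
  unfold ocExt ocPush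
  by_cases h : y ∈ Set.range φ
  · rw [dif_pos h]
  · rw [dif_neg h, Finset.filter_false_of_mem, Finset.sum_empty]
    intro x _ hx
    exact h ⟨x, hx⟩

lemma cont_ocPush [Fintype (Set.range φ)] :
    Continuous fun f : orderComplexSpace P =>
      fun y : Set.range φ => ocPush φ (f : P → ℝ) y :=
  continuous_pi fun _ => continuous_finset_sum _ fun x _ =>
    (continuous_apply x).comp continuous_subtype_val

lemma cont_ocExt [Fintype (Set.range φ)] :
    Continuous fun g : orderComplexSpace (Set.range φ) =>
      fun x : P => ocExt φ (g : Set.range φ → ℝ) x := by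
  refine continuous_pi fun x => ?_
  unfold ocExt
  by_cases h : x ∈ Set.range φ
  · simp only [dif_pos h]
    exact (continuous_apply _).comp continuous_subtype_val
  · simp only [dif_neg h]
    exact continuous_const

lemma cont_ocH :
    Continuous fun p : unitInterval × orderComplexSpace P =>
      fun y : P => ocH φ (p.1 : ℝ) (p.2 : P → ℝ) y := by
  have hf : ∀ x : P, Continuous fun p : unitInterval × orderComplexSpace P =>
      (p.2 : P → ℝ) x :=
    fun x => (continuous_apply x).comp (continuous_subtype_val.comp continuous_snd)
  have ht : Continuous fun p : unitInterval × orderComplexSpace P => (p.1 : ℝ) :=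
    continuous_subtype_val.comp continuous_fst
  have hS : ∀ x : P, Continuous fun p : unitInterval × orderComplexSpace P =>
      ocS (p.2 : P → ℝ) x :=
    fun x => continuous_finset_sum _ fun z _ => hf z
  have hB : ∀ x : P, Continuous fun p : unitInterval × orderComplexSpace P =>
      ocB (p.1 : ℝ) (p.2 : P → ℝ) x :=
    fun x => (hf x).min (continuous_const.max (ht.sub (hS x)))
  exact continuous_pi fun y =>
    ((hf y).sub (hB y)).add (continuous_finset_sum _ fun x _ => hB x)

end OCAux

/-- If P is a finite poset with a closure operator φ (increasing, monotone,
idempotent), then the order complexes of P and of the image φ(P) are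
homotopy equivalent. -/
theorem orderComplex_closureOperator_homotopyEquiv
    {P : Type*} [PartialOrder P] [Fintype P] (φ : P → P)
    (hincr : ∀ x : P, x ≤ φ x)
    (hmono : ∀ x y : P, x ≤ y → φ x ≤ φ y)
    (hidem : ∀ x : P, φ (φ x) = φ x) :
    letI : Fintype (Set.range φ) := Set.Finite.fintype (Set.finite_range φ)
    Nonempty
      (ContinuousMap.HomotopyEquiv (orderComplexSpace P)
        (orderComplexSpace (Set.range φ))) := by
  letI : Fintype (Set.range φ) := Set.Finite.fintype (Set.finite_range φ)
  let Fc : C(orderComplexSpace P, orderComplexSpace (Set.range φ)) :=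
    ⟨fun f => ⟨ocPush φ (f : P → ℝ), ocPush_mem hmono f.2⟩,
      Continuous.subtype_mk cont_ocPush _⟩
  let Gc : C(orderComplexSpace (Set.range φ), orderComplexSpace P) :=
    ⟨fun g => ⟨ocExt φ (g : Set.range φ → ℝ), ocExt_mem g.2⟩,
      Continuous.subtype_mk cont_ocExt _⟩
  have hright : Fc.comp Gc = ContinuousMap.id _ := by
    ext g y
    exact ocPush_ocExt hidem y
  let H : ContinuousMap.Homotopy (ContinuousMap.id (orderComplexSpace P))
      (Gc.comp Fc) :=
    { toFun := fun p => ⟨ocH φ (p.1 : ℝ) (p.2 : P → ℝ),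
        ocH_mem hincr hmono p.2.2⟩
      continuous_toFun := Continuous.subtype_mk cont_ocH _
      map_zero_left := fun f => Subtype.ext (by
        show ocH φ ((0 : unitInterval) : ℝ) (f : P → ℝ) = (f : P → ℝ)
        exact ocH_zero f.2.1)
      map_one_left := fun f => Subtype.ext (by
        show ocH φ ((1 : unitInterval) : ℝ) (f : P → ℝ)
          = ocExt φ (ocPush φ (f : P → ℝ))
        exact ocH_one f.2.1 f.2.2.1) }
  exact ⟨{ toFun := Fc
           invFun := Gc
           left_inv := ⟨H.symm⟩
           right_inv := hright ▸ ContinuousMap.Homotopic.refl _ }⟩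
end

section
/- The image of the closure operator S ↦ S̄ on the poset of subracks of a conjugacy class C in a finite p-group is isomorphic, as a poset, to the Boolean lattice of subsets of the set of H-orbits of C, where H = ⟨C⟩. -/
/-- The image of the closure operator S ↦ S̄ (union of H-orbits meeting S) on
the poset of subracks of a conjugacy class C in a finite p-group consists
exactly of the unions of H-orbits, and is order-isomorphic to the Boolean
lattice of subsets of the set of H-orbits of C, where H = ⟨C⟩. -/
theorem image_orbit_closure_orderIso_boolean {p : ℕ} [Fact p.Prime]
    {G : Type*} [Group G] [Finite G] (hp : IsPGroup p G) (g : G)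
    (C : Set G) (hC : C = {x : G | IsConj g x}) (hC1 : 1 < Nat.card C)
    (H : Subgroup G) (hH : H = Subgroup.closure C)
    (Orbs : Set (Set G))
    (hOrbs : Orbs = {O : Set G | ∃ a ∈ C, O = {b : G | ∃ h ∈ H, h * a * h⁻¹ = b}})
    (bar : Set G → Set G)
    (hbar : ∀ S : Set G, bar S = {b : G | ∃ a ∈ S, ∃ h ∈ H, h * a * h⁻¹ = b}) :
    {T : Set G | ∃ S : Set G, IsSubrackOf S C ∧ T = bar S}
        = {T : Set G | ∃ 𝒜 ⊆ Orbs, T = ⋃₀ 𝒜} ∧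
      Nonempty
        ({T : Set G // ∃ S : Set G, IsSubrackOf S C ∧ T = bar S} ≃o Set Orbs) := by
  have hCH : C ⊆ (H : Set G) := by rw [hH]; exact Subgroup.subset_closure
  -- each orbit is contained in C
  have horbC : ∀ O ∈ Orbs, O ⊆ C := by
    intro O hO b hb
    rw [hOrbs] at hO
    obtain ⟨a, haC, rfl⟩ := hO
    obtain ⟨h, hh, rfl⟩ := hb
    rw [hC] at haC ⊢
    obtain ⟨c, hc⟩ := isConj_iff.mp haC
    exact isConj_iff.mpr ⟨h * c, by rw [← hc]; group⟩
  -- orbits are closed under H-conjugation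
  have horbClosed : ∀ O ∈ Orbs, ∀ h ∈ H, ∀ b ∈ O, h * b * h⁻¹ ∈ O := by
    intro O hO h hh b hb
    rw [hOrbs] at hO
    obtain ⟨a, haC, rfl⟩ := hO
    obtain ⟨k, hk, rfl⟩ := hb
    exact ⟨h * k, mul_mem hh hk, by group⟩
  -- orbits are nonempty
  have horbNe : ∀ O ∈ Orbs, O.Nonempty := by
    intro O hO
    rw [hOrbs] at hO
    obtain ⟨a, haC, rfl⟩ := hO
    exact ⟨a, 1, one_mem H, by group⟩
  -- an orbit equals the orbit of any of its elements
  have horbMem : ∀ O ∈ Orbs, ∀ x ∈ O, O = {b : G | ∃ h ∈ H, h * x * h⁻¹ = b} := by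
    intro O hO x hx
    rw [hOrbs] at hO
    obtain ⟨a, haC, rfl⟩ := hO
    obtain ⟨h₀, hh₀, hx⟩ := hx
    ext b
    constructor
    · rintro ⟨h, hh, rfl⟩
      exact ⟨h * h₀⁻¹, mul_mem hh (inv_mem hh₀), by rw [← hx]; group⟩
    · rintro ⟨h, hh, rfl⟩
      exact ⟨h * h₀, mul_mem hh hh₀, by rw [← hx]; group⟩
  -- two orbits that intersect are equal
  have horbEq : ∀ O ∈ Orbs, ∀ O' ∈ Orbs, ∀ x, x ∈ O → x ∈ O' → O = O' := by
    intro O hO O' hO' x hx hx'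
    rw [horbMem O hO x hx, horbMem O' hO' x hx']
  -- the key set equality
  have Eq1 : {T : Set G | ∃ S : Set G, IsSubrackOf S C ∧ T = bar S}
      = {T : Set G | ∃ 𝒜 ⊆ Orbs, T = ⋃₀ 𝒜} := by
    ext T
    constructor
    · rintro ⟨S, ⟨hSC, hSr⟩, rfl⟩
      refine ⟨{O | O ∈ Orbs ∧ (O ∩ S).Nonempty}, fun O hO => hO.1, ?_⟩
      rw [hbar]
      ext b
      constructor
      · rintro ⟨a, haS, h, hh, rfl⟩
        refine ⟨{b : G | ∃ h ∈ H, h * a * h⁻¹ = b}, ⟨?_, ⟨a, ⟨1, one_mem H, by group⟩, haS⟩⟩,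
          ⟨h, hh, rfl⟩⟩
        rw [hOrbs]
        exact ⟨a, hSC haS, rfl⟩
      · rintro ⟨O, ⟨hO, x, hxO, hxS⟩, hbO⟩
        rw [horbMem O hO x hxO] at hbO
        obtain ⟨h, hh, rfl⟩ := hbO
        exact ⟨x, hxS, h, hh, rfl⟩
    · rintro ⟨𝒜, h𝒜, rfl⟩
      refine ⟨⋃₀ 𝒜, ⟨?_, ?_⟩, ?_⟩
      · rintro x ⟨O, hO, hxO⟩
        exact horbC O (h𝒜 hO) hxO
      · rintro a ⟨Oa, hOa, haOa⟩ b ⟨O, hO, hbO⟩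
        have haH : a ∈ H := hCH (horbC Oa (h𝒜 hOa) haOa)
        exact ⟨O, hO, horbClosed O (h𝒜 hO) a haH b hbO⟩
      · rw [hbar]
        ext b
        constructor
        · rintro ⟨O, hO, hbO⟩
          exact ⟨b, ⟨O, hO, hbO⟩, 1, one_mem H, by group⟩
        · rintro ⟨a, ⟨O, hO, haO⟩, h, hh, rfl⟩
          exact ⟨O, hO, horbClosed O (h𝒜 hO) h hh a haO⟩
  have hmem : ∀ T : Set G, (∃ S : Set G, IsSubrackOf S C ∧ T = bar S) ↔
      (∃ 𝒜 ⊆ Orbs, T = ⋃₀ 𝒜) := fun T => Set.ext_iff.mp Eq1 T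
  refine ⟨Eq1, ⟨?_⟩⟩
  refine
    { toFun := fun T => {O : Orbs | (O : Set G) ⊆ T.1}
      invFun := fun 𝒜 => ⟨⋃₀ ((↑) '' 𝒜), (hmem _).mpr
        ⟨(↑) '' 𝒜, by rintro O ⟨⟨O', hO'⟩, _, rfl⟩; exact hO', rfl⟩⟩
      left_inv := ?_
      right_inv := ?_
      map_rel_iff' := ?_ }
  · rintro ⟨T, hT⟩
    apply Subtype.ext
    obtain ⟨𝒜, h𝒜, rfl⟩ := (hmem T).mp hT
    apply Set.Subset.antisymm
    · rintro x ⟨O, ⟨⟨O', hO'⟩, hsub, rfl⟩, hxO⟩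
      exact hsub hxO
    · rintro x ⟨O, hO, hxO⟩
      exact ⟨O, ⟨⟨O, h𝒜 hO⟩, fun y hy => ⟨O, hO, hy⟩, rfl⟩, hxO⟩
  · intro 𝒜
    ext O
    simp only [Set.mem_setOf_eq]
    constructor
    · intro hsub
      obtain ⟨x, hxO⟩ := horbNe O O.2
      obtain ⟨O', ⟨⟨O'', hO''⟩, hO''𝒜, rfl⟩, hxO'⟩ := hsub hxO
      have : (O : Set G) = O'' := horbEq O O.2 O'' hO'' x hxO hxO'
      have : O = (⟨O'', hO''⟩ : Orbs) := Subtype.ext this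
      rwa [this]
    · intro hO𝒜
      exact fun y hy => ⟨O, ⟨O, hO𝒜, rfl⟩, hy⟩
  · rintro ⟨T₁, hT₁⟩ ⟨T₂, hT₂⟩
    simp only [Equiv.coe_fn_mk, Set.le_eq_subset, Set.setOf_subset_setOf, Subtype.mk_le_mk]
    constructor
    · intro hsub
      obtain ⟨𝒜, h𝒜, rfl⟩ := (hmem T₁).mp hT₁
      rintro x ⟨O, hO, hxO⟩
      have hOsub : (O : Set G) ⊆ ⋃₀ 𝒜 := fun y hy => ⟨O, hO, hy⟩
      exact hsub (⟨O, h𝒜 hO⟩ : Orbs) hOsub hxO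
    · intro h O hO
      exact hO.trans h
end
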